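/- Improved first-derivative resolvent estimate with defect-decaying prefactor. Fix d, N_b ≥ 1 and 𝔪, c₃ > 0. There exists C > 0, depending only on d, N_b, 𝔪, c₃, such that the following holds. Let Λ be a countable set, y : Λ → ℝ^d 𝔪-separated, m ∈ Λ, and let γ, γ₁, c₁, c₂ > 0. Let R and B be bounded operators on ℓ²(Λ × {1,…,N_b}) whose matrix entries satisfy |R^{ab}_{ℓk}| ≤ c₁ e^{−γ r_{ℓk}} + c₂ e^{−γ(|y(ℓ)| + |y(k)|)} and |B^{ab}_{ℓk}| ≤ c₃ e^{−γ₁ (r_{ℓm} + r_{mk})} for all ℓ, k, a, b. Then, with η := min{γ, γ₁}, for all ℓ ∈ Λ and 1 ≤ a ≤ N_b: |(R B R)^{aa}_{ℓℓ}| ≤ C (1 + η^{−4d}) · (c₁² + c₂² e^{−(η/2)(|y(ℓ)| + |y(m)| − r_{ℓm})}) · e^{−(η/2) r_{ℓm}}. In particular, since |y(ℓ)| + |y(m)| ≥ r_{ℓm}, the prefactor converges to the unperturbed value C(1 + η^{−4d})c₁² exponentially fast as |y(ℓ)| + |y(m)| − r_{ℓm} → ∞. -/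

import Mathlib

/-- Matrix entry `T^{ab}_{ℓk} = ⟨δ_{(ℓ,a)}, T δ_{(k,b)}⟩` of a bounded operator on `ℓ²(ι)`. -/
noncomputable def entry {ι : Type*} [DecidableEq ι]
    (T : lp (fun _ : ι => ℂ) 2 →L[ℂ] lp (fun _ : ι => ℂ) 2) (i j : ι) : ℂ :=
  inner ℂ (lp.single 2 i (1 : ℂ)) (T (lp.single 2 j (1 : ℂ)))


open scoped BigOperators ENNReal NNReal

lemma pow_le_exp_aux {x : ℝ} (hx : 0 ≤ x) {d : ℕ} (hd : 1 ≤ d) :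
    x ^ d ≤ (d : ℝ) ^ d * Real.exp x := by
  have hd0 : (0:ℝ) < d := by exact_mod_cast hd
  have h1 : x / d ≤ Real.exp (x / d) := by
    have := Real.add_one_le_exp (x / d)
    nlinarith [Real.exp_pos (x / d)]
  have h2 : (x / d) ^ d ≤ (Real.exp (x / d)) ^ d :=
    pow_le_pow_left₀ (by positivity) h1 d
  have h3 : (Real.exp (x / d)) ^ d = Real.exp x := by
    rw [← Real.exp_nat_mul]
    congr 1
    field_simp
  have h4 : x ^ d = (d : ℝ) ^ d * (x / d) ^ d := by
    rw [div_pow, mul_div_cancel₀]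
    positivity
  rw [h4]; rw [← h3]; exact mul_le_mul_of_nonneg_left h2 (by positivity)

lemma series_bound (d : ℕ) (hd : 1 ≤ d) {t : ℝ} (ht : 0 < t) :
    Summable (fun n : ℕ => ((n : ℝ) + 2) ^ d * Real.exp (-t * n)) ∧
      ∑' n : ℕ, ((n : ℝ) + 2) ^ d * Real.exp (-t * n) ≤
        3 * Real.exp 1 * (2 * d) ^ d * (1 + t⁻¹) ^ (d + 1) := by
  set u : ℝ := min t 1 with hu
  have hu0 : 0 < u := lt_min ht one_pos
  have hu1 : u ≤ 1 := min_le_right _ _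
  have hut : u ≤ t := min_le_left _ _
  set r : ℝ := Real.exp (-u / 2) with hr
  have hr0 : 0 ≤ r := (Real.exp_pos _).le
  have hr1 : r < 1 := by
    rw [hr, Real.exp_lt_one_iff]; linarith
  have hgeo : Summable (fun n : ℕ => r ^ n) := summable_geometric_of_lt_one hr0 hr1
  have hbound : ∀ n : ℕ, ((n : ℝ) + 2) ^ d * Real.exp (-t * n) ≤
      (Real.exp 1 * (2 * d / u) ^ d) * r ^ n := by
    intro n
    have hn0 : (0:ℝ) ≤ (n:ℝ) := Nat.cast_nonneg n
    have h1 : (u * ((n : ℝ) + 2) / 2) ^ d ≤ (d : ℝ) ^ d * Real.exp (u * ((n:ℝ) + 2) / 2) :=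
      pow_le_exp_aux (by positivity) hd
    have h2 : ((n : ℝ) + 2) ^ d ≤ (2 * d / u) ^ d * Real.exp (u * ((n:ℝ) + 2) / 2) := by
      have he : ((n : ℝ) + 2) ^ d = (2 / u) ^ d * (u * ((n : ℝ) + 2) / 2) ^ d := by
        rw [← mul_pow]; congr 1; field_simp
      rw [he]
      calc (2 / u) ^ d * (u * ((n : ℝ) + 2) / 2) ^ d
          ≤ (2 / u) ^ d * ((d : ℝ) ^ d * Real.exp (u * ((n:ℝ) + 2) / 2)) :=
            mul_le_mul_of_nonneg_left h1 (by positivity)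
        _ = (2 * d / u) ^ d * Real.exp (u * ((n:ℝ) + 2) / 2) := by
            rw [← mul_assoc, ← mul_pow]; congr 2; field_simp
    have h3 : Real.exp (-t * n) ≤ Real.exp (-u * n) := by
      apply Real.exp_le_exp.2; nlinarith
    calc ((n : ℝ) + 2) ^ d * Real.exp (-t * n)
        ≤ ((2 * d / u) ^ d * Real.exp (u * ((n:ℝ) + 2) / 2)) * Real.exp (-u * n) :=
          mul_le_mul h2 h3 (Real.exp_pos _).le (by positivity)
      _ = (2 * d / u) ^ d * Real.exp (u * ((n:ℝ) + 2) / 2 + -u * n) := by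
          rw [mul_assoc, ← Real.exp_add]
      _ = (2 * d / u) ^ d * (Real.exp u * Real.exp ((-u/2) * n)) := by
          rw [← Real.exp_add]; ring_nf
      _ ≤ (2 * d / u) ^ d * (Real.exp 1 * Real.exp ((-u/2) * n)) := by
          apply mul_le_mul_of_nonneg_left _ (by positivity)
          exact mul_le_mul_of_nonneg_right (Real.exp_le_exp.2 hu1) (Real.exp_pos _).le
      _ = (Real.exp 1 * (2 * d / u) ^ d) * r ^ n := by
          rw [hr, ← Real.exp_nat_mul]; ring_nf
  have hsum : Summable (fun n : ℕ => ((n : ℝ) + 2) ^ d * Real.exp (-t * n)) := by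
    apply Summable.of_nonneg_of_le (fun n => by positivity) hbound
    exact (hgeo.mul_left _)
  refine ⟨hsum, ?_⟩
  have hts : ∑' n : ℕ, ((n : ℝ) + 2) ^ d * Real.exp (-t * n) ≤
      (Real.exp 1 * (2 * d / u) ^ d) * (1 - r)⁻¹ := by
    calc ∑' n : ℕ, ((n : ℝ) + 2) ^ d * Real.exp (-t * n)
        ≤ ∑' n : ℕ, (Real.exp 1 * (2 * d / u) ^ d) * r ^ n :=
          Summable.tsum_le_tsum hbound hsum (hgeo.mul_left _)
      _ = (Real.exp 1 * (2 * d / u) ^ d) * ∑' n : ℕ, r ^ n := tsum_mul_left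
      _ = (Real.exp 1 * (2 * d / u) ^ d) * (1 - r)⁻¹ := by
          rw [tsum_geometric_of_lt_one hr0 hr1]
  refine hts.trans ?_
  have hinv : (1 - r)⁻¹ ≤ 3 / u := by
    have h15 : u / 2 + 1 ≤ Real.exp (u / 2) := Real.add_one_le_exp (u / 2)
    have hru : r * Real.exp (u / 2) = 1 := by
      rw [hr, ← Real.exp_add, show -u / 2 + u / 2 = 0 by ring, Real.exp_zero]
    have hr13 : u / 3 ≤ 1 - r := by nlinarith
    have h13 : (0:ℝ) < u / 3 := by linarith
    calc (1 - r)⁻¹ ≤ (u / 3)⁻¹ := inv_anti₀ h13 hr13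
      _ = 3 / u := by rw [inv_div]
  have huinv : u⁻¹ ≤ 1 + t⁻¹ := by
    rcases le_total t 1 with h | h
    · rw [hu, min_eq_left h]
      have : 0 < t⁻¹ := by positivity
      linarith
    · rw [hu, min_eq_right h]
      have : 0 ≤ t⁻¹ := by positivity
      simp; linarith
  calc (Real.exp 1 * (2 * d / u) ^ d) * (1 - r)⁻¹
      ≤ (Real.exp 1 * (2 * d / u) ^ d) * (3 / u) :=
        mul_le_mul_of_nonneg_left hinv (by positivity)
    _ = 3 * Real.exp 1 * (2 * d) ^ d * (u⁻¹) ^ (d + 1) := by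
        rw [pow_succ, div_pow, mul_pow, inv_pow]; field_simp
    _ ≤ 3 * Real.exp 1 * (2 * d) ^ d * (1 + t⁻¹) ^ (d + 1) := by
        apply mul_le_mul_of_nonneg_left (pow_le_pow_left₀ (by positivity) huinv _)
        positivity

open Metric MeasureTheory in
lemma counting_lemma (d : ℕ) (hd : 1 ≤ d) {𝔪 : ℝ} (h𝔪 : 0 < 𝔪)
    {Λ : Type} {y : Λ → EuclideanSpace ℝ (Fin d)}
    (hy : ∀ ℓ k : Λ, ℓ ≠ k → 𝔪 ≤ dist (y ℓ) (y k))
    (z : EuclideanSpace ℝ (Fin d)) {ρ : ℝ} (hρ : 0 < ρ) (F : Finset Λ)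
    (hF : ∀ j ∈ F, dist (y j) z < ρ) :
    (F.card : ℝ) * (𝔪 / 2) ^ d ≤ (ρ + 𝔪 / 2) ^ d := by
  set μ : Measure (EuclideanSpace ℝ (Fin d)) := volume with hμ
  have hdisj : (↑F : Set Λ).PairwiseDisjoint (fun j => ball (y j) (𝔪 / 2)) := by
    intro a _ b _ hab
    exact ball_disjoint_ball (by linarith [hy a b hab])
  have h1 : ∑ j ∈ F, μ (ball (y j) (𝔪 / 2)) = μ (⋃ j ∈ F, ball (y j) (𝔪 / 2)) :=
    (measure_biUnion_finset hdisj (fun j _ => measurableSet_ball)).symm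
  have h2 : (⋃ j ∈ F, ball (y j) (𝔪 / 2)) ⊆ ball z (ρ + 𝔪 / 2) := by
    intro x hx
    simp only [Set.mem_iUnion] at hx
    obtain ⟨j, hj, hxj⟩ := hx
    rw [mem_ball] at hxj ⊢
    calc dist x z ≤ dist x (y j) + dist (y j) z := dist_triangle _ _ _
      _ < 𝔪 / 2 + ρ := add_lt_add hxj (hF j hj)
      _ = ρ + 𝔪 / 2 := by ring
  have hball : ∀ x : EuclideanSpace ℝ (Fin d),
      μ (ball x (𝔪 / 2)) = ENNReal.ofReal ((𝔪 / 2) ^ d) * μ (ball 0 1) := by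
    intro x
    rw [hμ, Measure.addHaar_ball_of_pos _ x (by linarith)]
    congr
    exact finrank_euclideanSpace_fin
  have hball2 : μ (ball z (ρ + 𝔪 / 2)) = ENNReal.ofReal ((ρ + 𝔪 / 2) ^ d) * μ (ball 0 1) := by
    rw [hμ, Measure.addHaar_ball_of_pos _ z (by linarith)]
    congr
    exact finrank_euclideanSpace_fin
  have h3 : (F.card : ℝ≥0∞) * (ENNReal.ofReal ((𝔪 / 2) ^ d) * μ (ball 0 1)) ≤
      ENNReal.ofReal ((ρ + 𝔪 / 2) ^ d) * μ (ball 0 1) := by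
    rw [← hball2]
    calc (F.card : ℝ≥0∞) * (ENNReal.ofReal ((𝔪 / 2) ^ d) * μ (ball 0 1))
        = ∑ j ∈ F, ENNReal.ofReal ((𝔪 / 2) ^ d) * μ (ball 0 1) := by
          rw [Finset.sum_const, nsmul_eq_mul]
      _ = ∑ j ∈ F, μ (ball (y j) (𝔪 / 2)) := by
          apply Finset.sum_congr rfl; intro j _; rw [hball]
      _ = μ (⋃ j ∈ F, ball (y j) (𝔪 / 2)) := h1
      _ ≤ μ (ball z (ρ + 𝔪 / 2)) := measure_mono h2
  have hv0 : μ (ball (0 : EuclideanSpace ℝ (Fin d)) 1) ≠ 0 :=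
    (measure_ball_pos μ 0 one_pos).ne'
  have hvt : μ (ball (0 : EuclideanSpace ℝ (Fin d)) 1) ≠ ⊤ :=
    measure_ball_lt_top.ne
  rw [← mul_assoc] at h3
  have h4 : (F.card : ℝ≥0∞) * ENNReal.ofReal ((𝔪 / 2) ^ d) ≤
      ENNReal.ofReal ((ρ + 𝔪 / 2) ^ d) :=
    (ENNReal.mul_le_mul_iff_left hv0 hvt).1 h3
  have h5 : ENNReal.ofReal ((F.card : ℝ) * (𝔪 / 2) ^ d) ≤
      ENNReal.ofReal ((ρ + 𝔪 / 2) ^ d) := by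
    rwa [ENNReal.ofReal_mul (by positivity), ENNReal.ofReal_natCast]
  exact (ENNReal.ofReal_le_ofReal_iff (by positivity)).1 h5

lemma sep_sum (d : ℕ) (hd : 1 ≤ d) {𝔪 : ℝ} (h𝔪 : 0 < 𝔪) :
    ∃ K : ℝ, 0 < K ∧ ∀ (Λ : Type) (y : Λ → EuclideanSpace ℝ (Fin d)),
      (∀ ℓ k : Λ, ℓ ≠ k → 𝔪 ≤ dist (y ℓ) (y k)) →
      ∀ (z : EuclideanSpace ℝ (Fin d)) (t : ℝ), 0 < t →
        Summable (fun j => Real.exp (-t * dist (y j) z)) ∧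
        ∑' j, Real.exp (-t * dist (y j) z) ≤ K * (1 + t⁻¹) ^ (d + 1) := by
  set A : ℝ := ((1 + 𝔪 / 2) * (2 / 𝔪)) ^ d with hA
  have hA0 : 0 < A := by positivity
  refine ⟨A * (3 * Real.exp 1 * (2 * d) ^ d), by positivity, ?_⟩
  intro Λ y hy z t ht
  obtain ⟨hser, hsersum⟩ := series_bound d hd ht
  -- finite sum bound
  have hfin : ∀ F : Finset Λ, ∑ j ∈ F, Real.exp (-t * dist (y j) z) ≤
      A * (3 * Real.exp 1 * (2 * d) ^ d) * (1 + t⁻¹) ^ (d + 1) := by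
    intro F
    classical
    set φ : Λ → ℕ := fun j => ⌊dist (y j) z⌋₊ with hφ
    have hmt : ∀ x ∈ F, φ x ∈ F.image φ := fun x hx => Finset.mem_image_of_mem φ hx
    rw [← Finset.sum_fiberwise_of_maps_to hmt]
    have hinner : ∀ n ∈ F.image φ,
        ∑ j ∈ F.filter (fun j => φ j = n), Real.exp (-t * dist (y j) z) ≤
          A * ((n : ℝ) + 2) ^ d * Real.exp (-t * n) := by
      intro n _
      set Fn := F.filter (fun j => φ j = n) with hFn
      have hmem : ∀ j ∈ Fn, φ j = n := by
        intro j hj; exact (Finset.mem_filter.1 hj).2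
      have hterm : ∀ j ∈ Fn, Real.exp (-t * dist (y j) z) ≤ Real.exp (-t * n) := by
        intro j hj
        apply Real.exp_le_exp.2
        have : (n : ℝ) ≤ dist (y j) z := by
          rw [← hmem j hj]; exact Nat.floor_le dist_nonneg
        nlinarith
      have hcard : (Fn.card : ℝ) ≤ A * ((n : ℝ) + 2) ^ d := by
        have hlt : ∀ j ∈ Fn, dist (y j) z < (n : ℝ) + 1 := by
          intro j hj
          rw [← hmem j hj]
          exact Nat.lt_floor_add_one _
        have h1 := counting_lemma d hd h𝔪 (y := y) hy z
          (ρ := (n : ℝ) + 1) (by positivity) Fn hlt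
        have h𝔪d : (0:ℝ) < (𝔪 / 2) ^ d := by positivity
        rw [← le_div_iff₀ h𝔪d] at h1
        refine h1.trans ?_
        rw [div_le_iff₀ h𝔪d, hA]
        calc ((n : ℝ) + 1 + 𝔪 / 2) ^ d ≤ ((1 + 𝔪 / 2) * ((n : ℝ) + 2)) ^ d := by
              apply pow_le_pow_left₀ (by positivity)
              nlinarith [Nat.cast_nonneg (α := ℝ) n]
          _ = ((1 + 𝔪 / 2) * (2 / 𝔪)) ^ d * ((n:ℝ) + 2) ^ d * (𝔪 / 2) ^ d := by
              rw [← mul_pow, ← mul_pow]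
              congr 1
              field_simp
      calc ∑ j ∈ Fn, Real.exp (-t * dist (y j) z) ≤ ∑ j ∈ Fn, Real.exp (-t * n) :=
            Finset.sum_le_sum hterm
        _ = (Fn.card : ℝ) * Real.exp (-t * n) := by rw [Finset.sum_const, nsmul_eq_mul]
        _ ≤ A * ((n : ℝ) + 2) ^ d * Real.exp (-t * n) :=
            mul_le_mul_of_nonneg_right hcard (Real.exp_pos _).le
    calc ∑ n ∈ F.image φ, ∑ j ∈ F.filter (fun j => φ j = n), Real.exp (-t * dist (y j) z)
        ≤ ∑ n ∈ F.image φ, A * (((n : ℝ) + 2) ^ d * Real.exp (-t * n)) := by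
          apply Finset.sum_le_sum
          intro n hn
          rw [← mul_assoc]
          exact hinner n hn
      _ = A * ∑ n ∈ F.image φ, ((n : ℝ) + 2) ^ d * Real.exp (-t * n) := by
          rw [Finset.mul_sum]
      _ ≤ A * ∑' n : ℕ, ((n : ℝ) + 2) ^ d * Real.exp (-t * n) := by
          apply mul_le_mul_of_nonneg_left _ hA0.le
          exact Summable.sum_le_tsum _ (fun n _ => by positivity) hser
      _ ≤ A * (3 * Real.exp 1 * (2 * d) ^ d * (1 + t⁻¹) ^ (d + 1)) :=
          mul_le_mul_of_nonneg_left hsersum hA0.le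
      _ = A * (3 * Real.exp 1 * (2 * d) ^ d) * (1 + t⁻¹) ^ (d + 1) := by ring
  have hsummable : Summable (fun j => Real.exp (-t * dist (y j) z)) :=
    summable_of_sum_le (fun j => (Real.exp_pos _).le) hfin
  exact ⟨hsummable, Summable.tsum_le_of_sum_le hsummable hfin⟩

lemma coord_eq_inner {ι : Type*} [DecidableEq ι] (f : lp (fun _ : ι => ℂ) 2) (i : ι) :
    f i = inner (𝕜 := ℂ) (lp.single 2 i (1 : ℂ)) f := by
  rw [lp.inner_single_left]
  simp [RCLike.inner_apply]

lemma apply_coord {ι : Type*} [DecidableEq ι]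
    (T : lp (fun _ : ι => ℂ) 2 →L[ℂ] lp (fun _ : ι => ℂ) 2)
    (f : lp (fun _ : ι => ℂ) 2) (i : ι) :
    T f i = ∑' k, entry T i k * f k := by
  have h1 : T f i = inner (𝕜 := ℂ) (ContinuousLinearMap.adjoint T (lp.single 2 i (1:ℂ))) f := by
    rw [coord_eq_inner (T f) i, ← ContinuousLinearMap.adjoint_inner_left]
  rw [h1, lp.inner_eq_tsum]
  congr 1
  funext k
  rw [RCLike.inner_apply, mul_comm]
  congr 1
  have h2 : (ContinuousLinearMap.adjoint T (lp.single 2 i (1:ℂ))) k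
      = (starRingEnd ℂ) (entry T i k) := by
    rw [coord_eq_inner (ContinuousLinearMap.adjoint T (lp.single 2 i (1:ℂ))) k,
      ContinuousLinearMap.adjoint_inner_right, entry, ← inner_conj_symm]
  rw [h2, Complex.conj_conj]

lemma hasSum_prod_fst {Λ : Type} {Nb : ℕ} {F : Λ → ℝ} (hF : ∀ p, 0 ≤ F p)
    (h : Summable F) :
    HasSum (fun k : Λ × Fin Nb => F k.1) ((Nb : ℝ) * ∑' p, F p) := by
  have hfib : (fun x : Λ => ∑' _ : Fin Nb, F x) = fun x => (Nb : ℝ) * F x := by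
    funext x
    rw [tsum_fintype, Finset.sum_const, Finset.card_univ, Fintype.card_fin, nsmul_eq_mul]
  have hs : Summable (fun k : Λ × Fin Nb => F k.1) := by
    rw [summable_prod_of_nonneg (fun k => hF k.1)]
    refine ⟨fun x => (hasSum_fintype _).summable, ?_⟩
    simpa [hfib] using h.mul_left (Nb : ℝ)
  have ht : ∑' k : Λ × Fin Nb, F k.1 = (Nb : ℝ) * ∑' p, F p := by
    rw [Summable.tsum_prod' hs (fun x => (hasSum_fintype _).summable)]
    simp only [hfib]
    exact tsum_mul_left
  have := hs.hasSum
  rwa [ht] at this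

set_option maxHeartbeats 2000000 in
/-- **improved first-derivative resolvent estimate with defect-decaying
prefactor.** With `|R^{ab}_{ℓk}| ≤ c₁e^{−γ r_{ℓk}} + c₂e^{−γ(|y(ℓ)|+|y(k)|)}` and
`|B^{ab}_{ℓk}| ≤ c₃ e^{−γ₁(r_{ℓm}+r_{mk})}`, and `η = min{γ,γ₁}`:
`|(RBR)^{aa}_{ℓℓ}| ≤ C(1+η^{−4d})(c₁² + c₂² e^{−(η/2)(|y(ℓ)|+|y(m)|−r_{ℓm})}) e^{−(η/2)r_{ℓm}}`,
where `C` depends only on `d, N_b, 𝔪, c₃`. -/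
theorem stmt19 (d Nb : ℕ) (hd : 1 ≤ d) (hNb : 1 ≤ Nb) (𝔪 c₃ : ℝ)
    (h𝔪 : 0 < 𝔪) (hc₃ : 0 < c₃) :
    ∃ C : ℝ, 0 < C ∧
      ∀ (Λ : Type) [Countable Λ] [DecidableEq Λ]
        (y : Λ → EuclideanSpace ℝ (Fin d)),
        (∀ ℓ k : Λ, ℓ ≠ k → 𝔪 ≤ dist (y ℓ) (y k)) →
        ∀ (m : Λ) (γ γ₁ c₁ c₂ : ℝ), 0 < γ → 0 < γ₁ → 0 < c₁ → 0 < c₂ →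
          ∀ R B : lp (fun _ : Λ × Fin Nb => ℂ) 2 →L[ℂ] lp (fun _ : Λ × Fin Nb => ℂ) 2,
            (∀ (ℓ k : Λ) (a b : Fin Nb),
              ‖entry R (ℓ, a) (k, b)‖ ≤
                c₁ * Real.exp (-γ * dist (y ℓ) (y k)) +
                  c₂ * Real.exp (-γ * (‖y ℓ‖ + ‖y k‖))) →
            (∀ (ℓ k : Λ) (a b : Fin Nb),
              ‖entry B (ℓ, a) (k, b)‖ ≤
                c₃ * Real.exp (-γ₁ * (dist (y ℓ) (y m) + dist (y m) (y k)))) →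
            ∀ (ℓ : Λ) (a : Fin Nb),
              ‖entry (R ∘L B ∘L R) (ℓ, a) (ℓ, a)‖ ≤
                C * (1 + (min γ γ₁)⁻¹ ^ (4 * d)) *
                  (c₁ ^ 2 + c₂ ^ 2 *
                    Real.exp (-(min γ γ₁ / 2) * (‖y ℓ‖ + ‖y m‖ - dist (y ℓ) (y m)))) *
                  Real.exp (-(min γ γ₁ / 2) * dist (y ℓ) (y m)) := by
  obtain ⟨K, hK0, hKs⟩ := sep_sum d hd h𝔪
  have hNb0 : (0 : ℝ) < (Nb : ℝ) := by exact_mod_cast hNb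
  refine ⟨2 * 3 ^ (2 * d + 2) * (Nb : ℝ) ^ 2 * c₃ * K ^ 2,
    mul_pos (mul_pos (mul_pos (mul_pos two_pos (pow_pos (by norm_num) _))
      (pow_pos hNb0 2)) hc₃) (pow_pos hK0 2), ?_⟩
  intro Λ _ _ y hsep m γ γ₁ c₁ c₂ hγ hγ₁ hc₁ hc₂ R B hR hB ℓ a
  set η : ℝ := min γ γ₁ with hη
  have hη0 : 0 < η := lt_min hγ hγ₁
  set ε : ℝ := η / 2 with hε
  have hε0 : 0 < ε := by rw [hε]; linarith
  have hεγ : 2 * ε ≤ γ := by rw [hε, hη]; have := min_le_left γ γ₁; linarith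
  have hεγ₁ : 2 * ε ≤ γ₁ := by rw [hε, hη]; have := min_le_right γ γ₁; linarith
  set r : ℝ := dist (y ℓ) (y m) with hrdef
  set L : ℝ := ‖y ℓ‖ + ‖y m‖ with hLdef
  have hr0 : 0 ≤ r := dist_nonneg
  have hL0 : 0 ≤ L := by rw [hLdef]; positivity
  -- the one-variable sum
  set G : Λ → ℝ := fun q => Real.exp (-γ₁ * dist (y q) (y m)) *
    (c₁ * Real.exp (-γ * dist (y q) (y ℓ)) + c₂ * Real.exp (-γ * (‖y q‖ + ‖y ℓ‖))) with hG
  have hG0 : ∀ q, 0 ≤ G q := fun q => by rw [hG]; positivity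
  obtain ⟨hS1, hS1b⟩ := hKs Λ y hsep (y ℓ) ε hε0
  obtain ⟨hS2, hS2b⟩ := hKs Λ y hsep 0 ε hε0
  simp only [dist_zero_right] at hS2 hS2b
  set Gmaj : Λ → ℝ := fun q => c₁ * Real.exp (-ε * r) * Real.exp (-ε * dist (y q) (y ℓ))
    + c₂ * Real.exp (-ε * L) * Real.exp (-ε * ‖y q‖) with hGmaj
  have hGmajsum : Summable Gmaj := (hS1.mul_left _).add (hS2.mul_left _)
  have hGle : ∀ q, G q ≤ Gmaj q := by
    intro q
    have hd1 : dist (y ℓ) (y m) ≤ dist (y q) (y ℓ) + dist (y q) (y m) := by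
      calc dist (y ℓ) (y m) ≤ dist (y ℓ) (y q) + dist (y q) (y m) := dist_triangle _ _ _
        _ = dist (y q) (y ℓ) + dist (y q) (y m) := by rw [dist_comm (y ℓ) (y q)]
    have hd2 : ‖y m‖ ≤ dist (y q) (y m) + ‖y q‖ := by
      rw [dist_eq_norm]
      have h := norm_sub_norm_le (y m) (y q)
      rw [norm_sub_rev] at h
      linarith
    have t1 : Real.exp (-γ₁ * dist (y q) (y m)) * Real.exp (-γ * dist (y q) (y ℓ)) ≤
        Real.exp (-ε * r) * Real.exp (-ε * dist (y q) (y ℓ)) := by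
      rw [← Real.exp_add, ← Real.exp_add]
      apply Real.exp_le_exp.2
      have e1 : 2 * ε * dist (y q) (y m) ≤ γ₁ * dist (y q) (y m) :=
        mul_le_mul_of_nonneg_right hεγ₁ dist_nonneg
      have e2 : 2 * ε * dist (y q) (y ℓ) ≤ γ * dist (y q) (y ℓ) :=
        mul_le_mul_of_nonneg_right hεγ dist_nonneg
      have e3 : ε * r ≤ ε * (dist (y q) (y ℓ) + dist (y q) (y m)) :=
        mul_le_mul_of_nonneg_left hd1 hε0.le
      have e4 : 0 ≤ ε * dist (y q) (y m) := mul_nonneg hε0.le dist_nonneg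
      nlinarith
    have t2 : Real.exp (-γ₁ * dist (y q) (y m)) * Real.exp (-γ * (‖y q‖ + ‖y ℓ‖)) ≤
        Real.exp (-ε * L) * Real.exp (-ε * ‖y q‖) := by
      rw [← Real.exp_add, ← Real.exp_add]
      apply Real.exp_le_exp.2
      have e1 : 2 * ε * dist (y q) (y m) ≤ γ₁ * dist (y q) (y m) :=
        mul_le_mul_of_nonneg_right hεγ₁ dist_nonneg
      have e2 : 2 * ε * (‖y q‖ + ‖y ℓ‖) ≤ γ * (‖y q‖ + ‖y ℓ‖) :=
        mul_le_mul_of_nonneg_right hεγ (by positivity)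
      have e3 : ε * ‖y m‖ ≤ ε * (dist (y q) (y m) + ‖y q‖) :=
        mul_le_mul_of_nonneg_left hd2 hε0.le
      have e4 : 0 ≤ ε * dist (y q) (y m) := mul_nonneg hε0.le dist_nonneg
      have e5 : 0 ≤ ε * ‖y ℓ‖ := mul_nonneg hε0.le (norm_nonneg _)
      have e6 : 0 ≤ ε * ‖y q‖ := mul_nonneg hε0.le (norm_nonneg _)
      rw [hLdef]
      nlinarith
    calc G q = c₁ * (Real.exp (-γ₁ * dist (y q) (y m)) * Real.exp (-γ * dist (y q) (y ℓ)))
        + c₂ * (Real.exp (-γ₁ * dist (y q) (y m)) * Real.exp (-γ * (‖y q‖ + ‖y ℓ‖))) := by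
          rw [hG]; ring
      _ ≤ c₁ * (Real.exp (-ε * r) * Real.exp (-ε * dist (y q) (y ℓ)))
        + c₂ * (Real.exp (-ε * L) * Real.exp (-ε * ‖y q‖)) :=
          add_le_add (mul_le_mul_of_nonneg_left t1 hc₁.le) (mul_le_mul_of_nonneg_left t2 hc₂.le)
      _ = Gmaj q := by rw [hGmaj]; ring
  have hGsum : Summable G := Summable.of_nonneg_of_le hG0 hGle hGmajsum
  set S : ℝ := ∑' q, G q with hSdef
  have hS0 : 0 ≤ S := tsum_nonneg hG0
  set V : ℝ := K * (1 + ε⁻¹) ^ (d + 1) * (c₁ * Real.exp (-ε * r) + c₂ * Real.exp (-ε * L))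
    with hV
  have hSV : S ≤ V := by
    calc S ≤ ∑' q, Gmaj q := Summable.tsum_le_tsum hGle hGsum hGmajsum
      _ = c₁ * Real.exp (-ε * r) * ∑' q, Real.exp (-ε * dist (y q) (y ℓ))
          + c₂ * Real.exp (-ε * L) * ∑' q, Real.exp (-ε * ‖y q‖) := by
          rw [hGmaj, Summable.tsum_add (hS1.mul_left _) (hS2.mul_left _), tsum_mul_left, tsum_mul_left]
      _ ≤ c₁ * Real.exp (-ε * r) * (K * (1 + ε⁻¹) ^ (d + 1))
          + c₂ * Real.exp (-ε * L) * (K * (1 + ε⁻¹) ^ (d + 1)) :=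
          add_le_add (mul_le_mul_of_nonneg_left hS1b (by positivity))
            (mul_le_mul_of_nonneg_left hS2b (by positivity))
      _ = V := by rw [hV]; ring
  -- operator part
  set f := R (lp.single 2 ((ℓ, a) : Λ × Fin Nb) (1 : ℂ)) with hf
  have hfk : ∀ k : Λ × Fin Nb, f k = entry R k (ℓ, a) := by
    intro k
    rw [hf, entry]
    exact coord_eq_inner _ k
  have hBf : ∀ j : Λ × Fin Nb, ‖(B f) j‖ ≤
      (c₃ * Real.exp (-γ₁ * dist (y j.1) (y m))) * ((Nb : ℝ) * S) := by
    intro j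
    rw [apply_coord]
    refine tsum_of_norm_bounded
      ((hasSum_prod_fst hG0 hGsum).mul_left (c₃ * Real.exp (-γ₁ * dist (y j.1) (y m)))) ?_
    rintro ⟨k1, k2⟩
    rw [norm_mul, hfk]
    have h1 : ‖entry B j (k1, k2)‖ ≤
        c₃ * Real.exp (-γ₁ * (dist (y j.1) (y m) + dist (y m) (y k1))) := hB j.1 k1 j.2 k2
    have h2 : ‖entry R (k1, k2) (ℓ, a)‖ ≤
        c₁ * Real.exp (-γ * dist (y k1) (y ℓ)) + c₂ * Real.exp (-γ * (‖y k1‖ + ‖y ℓ‖)) :=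
      hR k1 ℓ k2 a
    calc ‖entry B j (k1, k2)‖ * ‖entry R (k1, k2) (ℓ, a)‖
        ≤ (c₃ * Real.exp (-γ₁ * (dist (y j.1) (y m) + dist (y m) (y k1)))) *
          (c₁ * Real.exp (-γ * dist (y k1) (y ℓ)) + c₂ * Real.exp (-γ * (‖y k1‖ + ‖y ℓ‖))) :=
          mul_le_mul h1 h2 (norm_nonneg _) (by positivity)
      _ = (c₃ * Real.exp (-γ₁ * dist (y j.1) (y m))) * G k1 := by
          rw [hG, show -γ₁ * (dist (y j.1) (y m) + dist (y m) (y k1)) =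
            -γ₁ * dist (y j.1) (y m) + -γ₁ * dist (y m) (y k1) by ring, Real.exp_add,
            dist_comm (y m) (y k1)]
          ring
  have step1 : entry (R ∘L B ∘L R) (ℓ, a) (ℓ, a) = (R (B f)) (ℓ, a) := by
    rw [entry, ← coord_eq_inner]
    simp only [ContinuousLinearMap.comp_apply, hf]
  have houter : ‖entry (R ∘L B ∘L R) (ℓ, a) (ℓ, a)‖ ≤
      (c₃ * ((Nb : ℝ) * S)) * ((Nb : ℝ) * S) := by
    rw [step1, apply_coord]
    refine tsum_of_norm_bounded
      ((hasSum_prod_fst hG0 hGsum).mul_left (c₃ * ((Nb : ℝ) * S))) ?_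
    rintro ⟨j1, j2⟩
    rw [norm_mul]
    have h1 : ‖entry R (ℓ, a) (j1, j2)‖ ≤
        c₁ * Real.exp (-γ * dist (y ℓ) (y j1)) + c₂ * Real.exp (-γ * (‖y ℓ‖ + ‖y j1‖)) :=
      hR ℓ j1 a j2
    have h2 : ‖(B f) (j1, j2)‖ ≤
        (c₃ * Real.exp (-γ₁ * dist (y j1) (y m))) * ((Nb : ℝ) * S) := hBf (j1, j2)
    calc ‖entry R (ℓ, a) (j1, j2)‖ * ‖(B f) (j1, j2)‖
        ≤ (c₁ * Real.exp (-γ * dist (y ℓ) (y j1)) + c₂ * Real.exp (-γ * (‖y ℓ‖ + ‖y j1‖))) *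
          ((c₃ * Real.exp (-γ₁ * dist (y j1) (y m))) * ((Nb : ℝ) * S)) :=
          mul_le_mul h1 h2 (norm_nonneg _) (by positivity)
      _ = (c₃ * ((Nb : ℝ) * S)) * G j1 := by
          simp only [hG]
          rw [dist_comm (y j1) (y ℓ), add_comm ‖y j1‖ ‖y ℓ‖]
          ring
  -- final numeric estimate
  have hηinv0 : (0:ℝ) ≤ η⁻¹ := by positivity
  have hεinv : ε⁻¹ = 2 * η⁻¹ := by rw [hε, inv_div, div_eq_mul_inv]
  have hpow : (1 + ε⁻¹) ^ (2 * d + 2) ≤ 3 ^ (2 * d + 2) * (1 + η⁻¹ ^ (4 * d)) := by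
    have h1 : 1 + ε⁻¹ ≤ 3 * max 1 η⁻¹ := by
      rcases le_total 1 η⁻¹ with hc | hc
      · rw [max_eq_right hc, hεinv]; linarith
      · rw [max_eq_left hc, hεinv]; linarith
    have h2 : (max 1 η⁻¹) ^ (2 * d + 2) ≤ 1 + η⁻¹ ^ (4 * d) := by
      rcases le_total 1 η⁻¹ with hc | hc
      · rw [max_eq_right hc]
        have h3 : η⁻¹ ^ (2 * d + 2) ≤ η⁻¹ ^ (4 * d) := pow_le_pow_right₀ hc (by omega)
        linarith
      · rw [max_eq_left hc, one_pow]
        have h3 : 0 ≤ η⁻¹ ^ (4 * d) := by positivity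
        linarith
    calc (1 + ε⁻¹) ^ (2 * d + 2) ≤ (3 * max 1 η⁻¹) ^ (2 * d + 2) :=
          pow_le_pow_left₀ (by positivity) h1 _
      _ = 3 ^ (2 * d + 2) * (max 1 η⁻¹) ^ (2 * d + 2) := mul_pow _ _ _
      _ ≤ 3 ^ (2 * d + 2) * (1 + η⁻¹ ^ (4 * d)) :=
          mul_le_mul_of_nonneg_left h2 (by positivity)
  have ha1 : Real.exp (-ε * r) ≤ 1 := by
    rw [Real.exp_le_one_iff]
    nlinarith
  have hW : (c₁ * Real.exp (-ε * r) + c₂ * Real.exp (-ε * L)) *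
      (c₁ * Real.exp (-ε * r) + c₂ * Real.exp (-ε * L)) ≤
      2 * ((c₁ ^ 2 + c₂ ^ 2 * Real.exp (-ε * (L - r))) * Real.exp (-ε * r)) := by
    have he1 : Real.exp (-ε * r) * Real.exp (-ε * r) ≤ Real.exp (-ε * r) := by
      nlinarith [ha1, (Real.exp_pos (-ε * r)).le]
    have hA1 : (c₁ * Real.exp (-ε * r)) * (c₁ * Real.exp (-ε * r)) ≤
        c₁ ^ 2 * Real.exp (-ε * r) := by
      calc (c₁ * Real.exp (-ε * r)) * (c₁ * Real.exp (-ε * r))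
          = c₁ ^ 2 * (Real.exp (-ε * r) * Real.exp (-ε * r)) := by ring
        _ ≤ c₁ ^ 2 * Real.exp (-ε * r) := mul_le_mul_of_nonneg_left he1 (by positivity)
    have he2 : Real.exp (-ε * L) * Real.exp (-ε * L) ≤
        Real.exp (-ε * (L - r)) * Real.exp (-ε * r) := by
      rw [← Real.exp_add, ← Real.exp_add]
      apply Real.exp_le_exp.2
      nlinarith [mul_nonneg hε0.le hL0]
    have hB1 : (c₂ * Real.exp (-ε * L)) * (c₂ * Real.exp (-ε * L)) ≤
        c₂ ^ 2 * (Real.exp (-ε * (L - r)) * Real.exp (-ε * r)) := by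
      calc (c₂ * Real.exp (-ε * L)) * (c₂ * Real.exp (-ε * L))
          = c₂ ^ 2 * (Real.exp (-ε * L) * Real.exp (-ε * L)) := by ring
        _ ≤ c₂ ^ 2 * (Real.exp (-ε * (L - r)) * Real.exp (-ε * r)) :=
            mul_le_mul_of_nonneg_left he2 (by positivity)
    nlinarith [sq_nonneg (c₁ * Real.exp (-ε * r) - c₂ * Real.exp (-ε * L)), hA1, hB1]
  have hV0 : 0 ≤ V := by rw [hV]; positivity
  refine houter.trans ?_
  calc (c₃ * ((Nb : ℝ) * S)) * ((Nb : ℝ) * S)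
      = (c₃ * (Nb : ℝ) ^ 2) * (S * S) := by ring
    _ ≤ (c₃ * (Nb : ℝ) ^ 2) * (V * V) :=
        mul_le_mul_of_nonneg_left (mul_le_mul hSV hSV hS0 hV0) (by positivity)
    _ = (c₃ * (Nb : ℝ) ^ 2) * (K ^ 2 * (1 + ε⁻¹) ^ (2 * d + 2) *
        ((c₁ * Real.exp (-ε * r) + c₂ * Real.exp (-ε * L)) *
          (c₁ * Real.exp (-ε * r) + c₂ * Real.exp (-ε * L)))) := by
        rw [hV, show 2 * d + 2 = (d + 1) + (d + 1) by ring, pow_add]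
        ring
    _ ≤ (c₃ * (Nb : ℝ) ^ 2) * (K ^ 2 * (3 ^ (2 * d + 2) * (1 + η⁻¹ ^ (4 * d))) *
        (2 * ((c₁ ^ 2 + c₂ ^ 2 * Real.exp (-ε * (L - r))) * Real.exp (-ε * r)))) := by
        apply mul_le_mul_of_nonneg_left _ (by positivity)
        apply mul_le_mul (mul_le_mul_of_nonneg_left hpow (by positivity)) hW
          (by positivity) (by positivity)
    _ = 2 * 3 ^ (2 * d + 2) * (Nb : ℝ) ^ 2 * c₃ * K ^ 2 * (1 + η⁻¹ ^ (4 * d)) *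
        (c₁ ^ 2 + c₂ ^ 2 * Real.exp (-ε * (L - r))) * Real.exp (-ε * r) := by ring
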